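/- Fix a ∈ (-1,1) and set c = (a-1)/2. Define g : [-1,1] → ℝ by g(x) = c for x < a, g(a) = c + 1/2, and g(x) = c + 1 for x > a. Then the Legendre coefficients of g satisfy c_0(g) = 0 and c_k(g) = (1/2)(P_{k-1}(a) - P_{k+1}(a)) for every integer k ≥ 1. -/

import Mathlib

open MeasureTheory Real Polynomial Finset

/-- The `n`-th Legendre polynomial (via Rodrigues' formula), normalized so that `P n 1 = 1`. -/
noncomputable def legendre (n : ℕ) : Polynomial ℝ :=
  ((2 ^ n * n.factorial : ℝ)⁻¹) • derivative^[n] ((X ^ 2 - 1) ^ n)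

/-- The `k`-th Legendre coefficient of `f : [-1,1] → ℝ`:  `c_k(f) = (k + 1/2) ∫_{-1}^1 f t P_k t dt`. -/
noncomputable def legendreCoeff (f : ℝ → ℝ) (k : ℕ) : ℝ :=
  ((k : ℝ) + 1 / 2) * ∫ t in (-1 : ℝ)..1, f t * (legendre k).eval t

/-- The `p`-th partial Legendre sum of `f`:  `S_p(f)(x) = ∑_{k=0}^p c_k(f) P_k(x)`. -/
noncomputable def legendreSum (f : ℝ → ℝ) (p : ℕ) (x : ℝ) : ℝ :=
  ∑ k ∈ Finset.range (p + 1), legendreCoeff f k * (legendre k).eval x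


lemma hsplit (n : ℕ) : ((X:ℝ[X]) ^ 2 - 1) ^ n = (X - C 1) ^ n * (X - C (-1)) ^ n := by
  rw [← mul_pow]; ring_nf; simp [C_1]; ring_nf

lemma legendre_eval_one (n : ℕ) : (legendre n).eval 1 = 1 := by
  have hne : (2:ℝ)^n * n.factorial ≠ 0 := by positivity
  have h2 : (derivative^[n] ((X^2-1 : ℝ[X])^n)).eval 1 = 2^n * n.factorial := by
    rw [hsplit, iterate_derivative_mul, eval_finset_sum, Finset.sum_eq_single 0]
    · simp only [Nat.choose_zero_right, one_smul, Nat.sub_zero, Function.iterate_zero_apply,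
        iterate_derivative_X_sub_pow_self, eval_mul, eval_natCast, eval_pow, eval_sub, eval_X,
        eval_C]
      norm_num; ring
    · intro b hb hb0
      have hbn : b ≤ n := Nat.lt_succ_iff.mp (Finset.mem_range.mp hb)
      rw [iterate_derivative_X_sub_pow, iterate_derivative_X_sub_pow]
      simp [Nat.sub_sub_self hbn, zero_pow hb0]
    · simp
  rw [legendre, eval_smul, h2, smul_eq_mul, inv_mul_cancel₀ hne]

lemma legendre_eval_neg_one (n : ℕ) : (legendre n).eval (-1) = (-1)^n := by
  have hne : (2:ℝ)^n * n.factorial ≠ 0 := by positivity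
  have h2 : (derivative^[n] ((X^2-1 : ℝ[X])^n)).eval (-1) = (-2)^n * n.factorial := by
    rw [hsplit, iterate_derivative_mul, eval_finset_sum, Finset.sum_eq_single n]
    · simp only [Nat.choose_self, one_smul, Nat.sub_self, Function.iterate_zero_apply,
        iterate_derivative_X_sub_pow_self, eval_mul, eval_natCast, eval_pow, eval_sub, eval_X,
        eval_C]
      ring
    · intro b hb hb0
      have hbn : b ≤ n := Nat.lt_succ_iff.mp (Finset.mem_range.mp hb)
      have hnb : n - b ≠ 0 := by omega
      rw [iterate_derivative_X_sub_pow, iterate_derivative_X_sub_pow]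
      simp [zero_pow hnb]
    · simp
  rw [legendre, eval_smul, h2, smul_eq_mul, neg_pow]
  field_simp


-- Leibniz for X * p
lemma iter_deriv_X_mul (p : ℝ[X]) : ∀ k : ℕ, derivative^[k+1] (X * p)
    = X * derivative^[k+1] p + ((k:ℝ[X])+1) * derivative^[k] p := by
  intro k
  induction k with
  | zero => simp [derivative_mul]; ring
  | succ k ih =>
    rw [Function.iterate_succ_apply' derivative (k+1) (X*p), ih]
    simp only [derivative_add, derivative_mul, derivative_X, derivative_natCast,
      derivative_one, ← Function.iterate_succ_apply' derivative,
      Nat.succ_eq_add_one, Nat.add_comm, Nat.add_assoc, Nat.add_left_comm]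
    push_cast
    ring

lemma deriv_u_succ (j : ℕ) : derivative ((X^2-1:ℝ[X])^(j+1))
    = (2*(j:ℝ[X])+2) * (X * (X^2-1:ℝ[X])^j) := by
  rw [derivative_pow]
  simp only [Nat.add_sub_cancel, derivative_sub, derivative_one, derivative_X_pow,
    C_eq_natCast]
  push_cast
  ring

-- the differentiated Pearson-type identity
lemma keyQ (m : ℕ) : ∀ j : ℕ, (X^2-1:ℝ[X]) * derivative^[j+2] ((X^2-1:ℝ[X])^m)
    = ((2*((m:ℤ)-(j:ℤ)-1) : ℤ) : ℝ[X]) * (X * derivative^[j+1] ((X^2-1:ℝ[X])^m))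
      + ((((j:ℤ)+1)*(2*(m:ℤ)-(j:ℤ)) : ℤ) : ℝ[X]) * derivative^[j] ((X^2-1:ℝ[X])^m) := by
  have base : (X^2-1:ℝ[X]) * derivative ((X^2-1:ℝ[X])^m)
      = (2*(m:ℝ[X])) * (X * (X^2-1:ℝ[X])^m) := by
    cases m with
    | zero => simp
    | succ j =>
      rw [deriv_u_succ, pow_succ]
      push_cast
      ring
  intro j
  induction j with
  | zero =>
    have h := congrArg derivative base
    simp only [derivative_mul, derivative_sub, derivative_one, derivative_X_pow,
      derivative_natCast, derivative_X, derivative_ofNat, C_eq_natCast] at h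
    have e0 : (derivative^[0] ((X^2-1:ℝ[X])^m)) = (X^2-1:ℝ[X])^m := rfl
    have e1 : (derivative^[0+1] ((X^2-1:ℝ[X])^m)) = derivative ((X^2-1:ℝ[X])^m) := rfl
    have e2 : (derivative^[0+2] ((X^2-1:ℝ[X])^m)) = derivative (derivative ((X^2-1:ℝ[X])^m)) := rfl
    rw [e0, e1, e2]
    push_cast at h ⊢
    linear_combination h
  | succ j ih =>
    have h := congrArg derivative ih
    simp only [derivative_add, derivative_mul, derivative_sub, derivative_one,
      derivative_X_pow, derivative_natCast, derivative_intCast, derivative_X, derivative_ofNat,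
      C_eq_natCast, ← Function.iterate_succ_apply' derivative,
      Nat.succ_eq_add_one, Nat.add_comm, Nat.add_assoc, Nat.add_left_comm] at h ⊢
    push_cast at h ⊢
    linear_combination h

lemma deriv_u_succ' (j : ℕ) : derivative ((X^2-1:ℝ[X])^(j+1))
    = C (2*(j:ℝ)+2) * (X * (X^2-1:ℝ[X])^j) := by
  rw [deriv_u_succ]
  congr 1
  simp [map_add, map_mul, map_ofNat, C_eq_natCast]

lemma iter_deriv_u (j k : ℕ) : derivative^[k+1] ((X^2-1:ℝ[X])^(j+1))
    = C (2*(j:ℝ)+2) * derivative^[k] (X * (X^2-1:ℝ[X])^j) := by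
  rw [Function.iterate_succ_apply, deriv_u_succ', iterate_derivative_C_mul]

lemma iter_deriv_X_mul' (p : ℝ[X]) (k : ℕ) : derivative^[k+1] (X * p)
    = X * derivative^[k+1] p + C ((k:ℝ)+1) * derivative^[k] p := by
  rw [iter_deriv_X_mul]
  congr 1
  simp [map_add, C_eq_natCast]

lemma star (n : ℕ) : X * derivative^[n+2] ((X^2-1:ℝ[X])^(n+1))
    = C ((n:ℝ)+1) * derivative^[n+1] ((X^2-1:ℝ[X])^(n+1))
      + C (2*(n:ℝ)+2) * derivative^[n+1] ((X^2-1:ℝ[X])^n) := by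
  cases n with
  | zero => norm_num
  | succ m =>
    have hQ := keyQ (m+1) m
    have h1 : derivative^[m+1+2] ((X^2-1:ℝ[X])^(m+1+1))
        = C (2*((m:ℝ)+1)+2) * (X * derivative^[m+2] ((X^2-1:ℝ[X])^(m+1))
            + C ((m:ℝ)+1+1) * derivative^[m+1] ((X^2-1:ℝ[X])^(m+1))) := by
      rw [iter_deriv_u (m+1) (m+2), iter_deriv_X_mul' _ (m+1)]
      push_cast
      ring_nf
    have h2 : derivative^[m+1+1] ((X^2-1:ℝ[X])^(m+1+1))
        = C (2*((m:ℝ)+1)+2) * (X * derivative^[m+1] ((X^2-1:ℝ[X])^(m+1))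
            + C ((m:ℝ)+1) * derivative^[m] ((X^2-1:ℝ[X])^(m+1))) := by
      rw [iter_deriv_u (m+1) (m+1), iter_deriv_X_mul' _ m]
      push_cast
      ring_nf
    rw [h1, h2]
    simp only [map_add, map_mul, map_sub, map_one, map_ofNat, C_eq_natCast] at hQ ⊢
    push_cast at hQ ⊢
    linear_combination (2*(m:ℝ[X])+4) * hQ

lemma legendre_deriv_identity (n : ℕ) :
    derivative (legendre (n+2)) = derivative (legendre n)
      + C (2*(n:ℝ)+3) * legendre (n+1) := by
  have hs1 : ((2:ℝ)^(n+2)*(n+2).factorial)⁻¹ * (2*(n:ℝ)+4) = ((2:ℝ)^(n+1)*(n+1).factorial)⁻¹ := by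
    rw [Nat.factorial_succ (n+1)]
    have h1 : ((2:ℝ)^(n+1)*(n+1).factorial) ≠ 0 := by positivity
    have h2 : ((2:ℝ)^(n+2)*((n+2):ℕ)*(n+1).factorial) ≠ 0 := by positivity
    push_cast
    field_simp
    ring
  have hs2 : ((2:ℝ)^(n+1)*(n+1).factorial)⁻¹ * (2*(n:ℝ)+2) = ((2:ℝ)^n * n.factorial)⁻¹ := by
    rw [Nat.factorial_succ n]
    have h1 : ((2:ℝ)^n*n.factorial) ≠ 0 := by positivity
    push_cast
    field_simp
    ring
  have hD : derivative (legendre (n+2))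
      = ((2 ^ (n+2) * (n+2).factorial : ℝ)⁻¹) • derivative^[n+3] ((X^2-1:ℝ[X])^(n+2)) := by
    rw [legendre, derivative_smul]
    congr 1
    exact (Function.iterate_succ_apply' derivative (n+2) _).symm
  have hDn : derivative (legendre n)
      = ((2 ^ n * n.factorial : ℝ)⁻¹) • derivative^[n+1] ((X^2-1:ℝ[X])^n) := by
    rw [legendre, derivative_smul]
    congr 1
    exact (Function.iterate_succ_apply' derivative n _).symm
  have h1 : derivative^[n+3] ((X^2-1:ℝ[X])^(n+2))
      = C (2*(n:ℝ)+4) * (X * derivative^[n+2] ((X^2-1:ℝ[X])^(n+1))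
          + C ((n:ℝ)+2) * derivative^[n+1] ((X^2-1:ℝ[X])^(n+1))) := by
    rw [iter_deriv_u (n+1) (n+2), iter_deriv_X_mul' _ (n+1)]
    push_cast
    ring_nf
  rw [hD, hDn, h1, star, legendre]
  set A := derivative^[n+1] ((X^2-1:ℝ[X])^(n+1)) with hA
  set B := derivative^[n+1] ((X^2-1:ℝ[X])^n) with hB
  simp only [smul_eq_C_mul]
  have hs1C := congrArg C hs1
  have hs2C := congrArg C hs2
  simp only [map_mul, map_add, map_ofNat, map_one, C_eq_natCast] at hs1C hs2C ⊢
  push_cast at hs1C hs2C ⊢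
  linear_combination ((2*(n:ℝ[X])+3) * A + (2*(n:ℝ[X])+2) * B) * hs1C + B * hs2C

lemma integral_legendre_succ (n : ℕ) (s t : ℝ) :
    ∫ x in s..t, (legendre (n+1)).eval x
      = (2*(n:ℝ)+3)⁻¹ * ((legendre (n+2) - legendre n).eval t
          - (legendre (n+2) - legendre n).eval s) := by
  have hne : (2*(n:ℝ)+3) ≠ 0 := by positivity
  have key : ∀ x : ℝ, HasDerivAt
      (fun y => (2*(n:ℝ)+3)⁻¹ * (legendre (n+2) - legendre n).eval y)
      ((legendre (n+1)).eval x) x := by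
    intro x
    have h := ((legendre (n+2) - legendre n : ℝ[X]).hasDerivAt x).const_mul ((2*(n:ℝ)+3)⁻¹)
    refine h.congr_deriv ?_; symm
    rw [derivative_sub]
    have hid : derivative (legendre (n+2)) - derivative (legendre n)
        = C (2*(n:ℝ)+3) * legendre (n+1) := by
      rw [legendre_deriv_identity n]; ring
    rw [hid, eval_mul, eval_C]
    field_simp
  rw [intervalIntegral.integral_eq_sub_of_hasDerivAt (fun x _ => key x)
    ((Continuous.intervalIntegrable (legendre (n+1)).continuous _ _))]
  ring

lemma integral_legendre_total (n : ℕ) :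
    ∫ x in (-1:ℝ)..1, (legendre (n+1)).eval x = 0 := by
  rw [integral_legendre_succ]
  simp [eval_sub, legendre_eval_one, legendre_eval_neg_one, pow_succ]

lemma integral_legendre_tail (n : ℕ) (a : ℝ) :
    ∫ x in a..1, (legendre (n+1)).eval x
      = (2*(n:ℝ)+3)⁻¹ * ((legendre n).eval a - (legendre (n+2)).eval a) := by
  rw [integral_legendre_succ]
  simp only [eval_sub, legendre_eval_one]
  ring

/-- the Legendre coefficients of the step function `g`. -/
theorem stmt_4 (a : ℝ) (ha : a ∈ Set.Ioo (-1 : ℝ) 1) (c : ℝ) (hc : c = (a - 1) / 2)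
    (g : ℝ → ℝ)
    (hg₁ : ∀ x : ℝ, x < a → g x = c)
    (hg₂ : g a = c + 1 / 2)
    (hg₃ : ∀ x : ℝ, a < x → g x = c + 1) :
    legendreCoeff g 0 = 0 ∧
      ∀ k : ℕ, 1 ≤ k →
        legendreCoeff g k = (1 / 2) * ((legendre (k - 1)).eval a - (legendre (k + 1)).eval a) := by
  obtain ⟨ha1, ha2⟩ := ha
  have hnea : ∀ᵐ t : ℝ, t ≠ a := by
    have : ({a} : Set ℝ) =ᵐ[volume] (∅ : Set ℝ) := by
      simp [ae_eq_empty, Real.volume_singleton]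
    rw [ae_iff]
    simpa using Real.volume_singleton (a := a)
  have huIoc1 : Set.uIoc (-1:ℝ) a = Set.Ioc (-1:ℝ) a := Set.uIoc_of_le ha1.le
  have huIoc2 : Set.uIoc a (1:ℝ) = Set.Ioc a (1:ℝ) := Set.uIoc_of_le ha2.le
  -- generic facts for any polynomial p
  have main : ∀ p : ℝ[X],
      (∫ t in (-1:ℝ)..1, g t * p.eval t)
        = c * (∫ t in (-1:ℝ)..1, p.eval t) + ∫ t in a..1, p.eval t := by
    intro p
    have hcont : Continuous fun t : ℝ => p.eval t := p.continuous
    have hI1 : IntervalIntegrable (fun t => g t * p.eval t) volume (-1) a := by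
      apply (((continuous_const (y := c)).mul hcont).intervalIntegrable (-1) a).congr_ae
      rw [huIoc1]
      filter_upwards [ae_restrict_mem measurableSet_Ioc, ae_restrict_of_ae hnea] with t ht hta
      have : t < a := lt_of_le_of_ne ht.2 hta
      rw [hg₁ t this]; rfl
    have hI2 : IntervalIntegrable (fun t => g t * p.eval t) volume a 1 := by
      apply (((continuous_const (y := c + 1)).mul hcont).intervalIntegrable a 1).congr_ae
      rw [huIoc2]
      filter_upwards [ae_restrict_mem measurableSet_Ioc] with t ht
      rw [hg₃ t ht.1]; rfl
    have e1 : (∫ t in (-1:ℝ)..a, g t * p.eval t) = ∫ t in (-1:ℝ)..a, c * p.eval t := by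
      apply intervalIntegral.integral_congr_ae
      filter_upwards [hnea] with t hta hmem
      rw [huIoc1] at hmem
      rw [hg₁ t (lt_of_le_of_ne hmem.2 hta)]
    have e2 : (∫ t in a..(1:ℝ), g t * p.eval t) = ∫ t in a..(1:ℝ), (c+1) * p.eval t := by
      apply intervalIntegral.integral_congr_ae
      filter_upwards with t hmem
      rw [huIoc2] at hmem
      rw [hg₃ t hmem.1]
    have hsplit : (∫ t in (-1:ℝ)..1, g t * p.eval t)
        = (∫ t in (-1:ℝ)..a, g t * p.eval t) + ∫ t in a..(1:ℝ), g t * p.eval t :=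
      (intervalIntegral.integral_add_adjacent_intervals hI1 hI2).symm
    have hsplitp : (∫ t in (-1:ℝ)..1, p.eval t)
        = (∫ t in (-1:ℝ)..a, p.eval t) + ∫ t in a..(1:ℝ), p.eval t :=
      (intervalIntegral.integral_add_adjacent_intervals
        (hcont.intervalIntegrable _ _) (hcont.intervalIntegrable _ _)).symm
    rw [hsplit, e1, e2, intervalIntegral.integral_const_mul, intervalIntegral.integral_const_mul,
      hsplitp]
    ring
  constructor
  · have h0 : legendre 0 = 1 := by simp [legendre]
    rw [legendreCoeff, main (legendre 0)]
    rw [h0]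
    simp only [eval_one, mul_one]
    rw [intervalIntegral.integral_const, intervalIntegral.integral_const]
    simp only [smul_eq_mul, mul_one]
    rw [hc]; ring
  · intro k hk
    obtain ⟨n, rfl⟩ : ∃ n, k = n + 1 := ⟨k - 1, (Nat.succ_pred_eq_of_pos hk).symm⟩
    rw [legendreCoeff, main (legendre (n+1)), integral_legendre_total n,
      integral_legendre_tail n a]
    have hne : (2*(n:ℝ)+3) ≠ 0 := by positivity
    simp only [Nat.add_sub_cancel]
    push_cast
    field_simp
    ring
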